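/- For every nonempty finite word ω of positive integers, ∫_{J_ω} (x − a(ω))² dP(x) = ∫_{J_{(ω,∞)}} (x − a(ω,∞))² dP(x) = p_ω · s_ω² · (1/8). -/

import Mathlib

open MeasureTheory Set
open scoped ENNReal

noncomputable section

/-- The similarity map `S_j(x) = x/3^j + 1 - 1/3^(j-1)`. -/
def Smap (j : ℕ) (x : ℝ) : ℝ := x / 3 ^ j + 1 - 1 / 3 ^ (j - 1)

/-- The similarity ratio `s_j = 3^(-j)`. -/
def srat (j : ℕ) : ℝ := (3 : ℝ)⁻¹ ^ j

/-- The probability `p_j = 2^(-j)`. -/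
def prob (j : ℕ) : ℝ := (2 : ℝ)⁻¹ ^ j

/-- `J_j = S_j([0,1])`. -/
def Jset (j : ℕ) : Set ℝ := Smap j '' Set.Icc 0 1

/-- For a word `ω = ω₁⋯ω_n`, `S_ω = S_{ω₁} ∘ ⋯ ∘ S_{ω_n}`. -/
def Sword : List ℕ → ℝ → ℝ
  | [] => id
  | j :: ω => Smap j ∘ Sword ω

/-- `s_ω = s_{ω₁} ⋯ s_{ω_n}`. -/
def sword (ω : List ℕ) : ℝ := (ω.map srat).prod

/-- `p_ω = p_{ω₁} ⋯ p_{ω_n}`. -/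
def pword (ω : List ℕ) : ℝ := (ω.map prob).prod

/-- `J_ω = S_ω([0,1])`. -/
def Jword (ω : List ℕ) : Set ℝ := Sword ω '' Set.Icc 0 1

/-- `ω⁻(ω_{|ω|} + j)` : the word obtained from `ω` by increasing its last letter by `j`. -/
def wordInc (ω : List ℕ) (j : ℕ) : List ℕ := ω.dropLast ++ [ω.getLastD 1 + j]

/-- `a(ω) = S_ω(1/2)`. -/
def aw (ω : List ℕ) : ℝ := Sword ω (1 / 2)

/-- `a(ω, ∞) = S_{ω⁻(ω_{|ω|}+1)}(1/2) + s_{ω⁻(ω_{|ω|}+1)}`. -/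
def awInf (ω : List ℕ) : ℝ := Sword (wordInc ω 1) (1 / 2) + sword (wordInc ω 1)

/-- `J_{(ω,∞)} = ⋃_{j ≥ 1} J_{ω⁻(ω_{|ω|}+j)}`. -/
def JwordInf (ω : List ℕ) : Set ℝ := ⋃ j : ℕ, Jword (wordInc ω (j + 1))

/-- A (nonempty) word over the alphabet `ℕ = {1, 2, 3, …}`. -/
def IsWord (ω : List ℕ) : Prop := ω ≠ [] ∧ ∀ i ∈ ω, 1 ≤ i

/-- The self-similarity equation `P = ∑_{j=1}^∞ 2^{-j} · P ∘ S_j^{-1}`. -/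
def SelfSim (P : Measure ℝ) : Prop :=
  P = Measure.sum fun j : ℕ => ((2 : ℝ≥0∞) ^ (j + 1))⁻¹ • P.map (Smap (j + 1))

/-- The distortion error `∫ min_{a ∈ A} (x - a)² dP(x)` of a set `A` of points. -/
def err (P : Measure ℝ) (A : Set ℝ) : ℝ :=
  ∫ x, sInf ((fun a => (x - a) ^ 2) '' A) ∂P

/-- The `n`-th quantization error. -/
def quantErr (P : Measure ℝ) (n : ℕ) : ℝ :=
  sInf {v | ∃ A : Set ℝ, A.Finite ∧ A.Nonempty ∧ A.ncard ≤ n ∧ v = err P A}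

/-- An optimal set of `n`-means. -/
def IsOptimal (P : Measure ℝ) (n : ℕ) (A : Set ℝ) : Prop :=
  A.Finite ∧ A.Nonempty ∧ A.ncard ≤ n ∧ err P A = quantErr P n

/-- The Voronoi region of `a` with respect to `A`. -/
def voronoi (A : Set ℝ) (a : ℝ) : Set ℝ := {x | ∀ b ∈ A, |x - a| ≤ |x - b|}

/-- `α(ℓ) = {a(ω) : p_ω = 2^{-ℓ}} ∪ {a(ω,∞) : p_ω = 2^{-ℓ}}`. -/
def alphaSet (l : ℕ) : Set ℝ :=
  {x | ∃ ω : List ℕ, IsWord ω ∧ pword ω = (2 : ℝ)⁻¹ ^ l ∧ (x = aw ω ∨ x = awInf ω)}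

/-- The set `α_n(I)` built from `α(ℓ)` and `I ⊆ α(ℓ)`. -/
def alphaNI (l : ℕ) (I : Set ℝ) : Set ℝ :=
  (alphaSet l \ I)
    ∪ {x | ∃ ω : List ℕ, IsWord ω ∧ pword ω = (2 : ℝ)⁻¹ ^ l ∧ aw ω ∈ I ∧
        (x = aw (ω ++ [1]) ∨ x = awInf (ω ++ [1]))}
    ∪ {x | ∃ ω : List ℕ, IsWord ω ∧ pword ω = (2 : ℝ)⁻¹ ^ l ∧ awInf ω ∈ I ∧
        (x = aw (wordInc ω 1) ∨ x = awInf (wordInc ω 1))}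



set_option linter.unusedSectionVars false

lemma srat_pos (j : ℕ) : 0 < srat j := by simp only [srat]; positivity
lemma sword_pos (ω : List ℕ) : 0 < sword ω := by
  induction ω with
  | nil => norm_num [sword]
  | cons j ω ih => simpa [sword] using mul_pos (srat_pos j) ih

lemma Smap_affine (j : ℕ) (x : ℝ) : Smap j x = srat j * x + Smap j 0 := by
  simp [Smap, srat, div_eq_inv_mul, inv_pow]
  ring

lemma Smap_sub (j : ℕ) (x y : ℝ) : Smap j x - Smap j y = srat j * (x - y) := by
  rw [Smap_affine j x, Smap_affine j y]; ring

lemma Sword_sub (ω : List ℕ) (x y : ℝ) :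
    Sword ω x - Sword ω y = sword ω * (x - y) := by
  induction ω with
  | nil => simp [Sword, sword]
  | cons j ω ih =>
    show Smap j (Sword ω x) - Smap j (Sword ω y) = _
    rw [Smap_sub, ih]; simp only [sword, List.map_cons, List.prod_cons]; ring

lemma Sword_affine (ω : List ℕ) (x : ℝ) : Sword ω x = sword ω * x + Sword ω 0 := by
  have := Sword_sub ω x 0; simp at this; linarith

lemma Sword_append (σ τ : List ℕ) (x : ℝ) :
    Sword (σ ++ τ) x = Sword σ (Sword τ x) := by
  induction σ with
  | nil => simp [Sword]
  | cons j σ ih => simp [Sword, ih]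

lemma sword_append (σ τ : List ℕ) : sword (σ ++ τ) = sword σ * sword τ := by
  simp [sword]

lemma pword_append (σ τ : List ℕ) : pword (σ ++ τ) = pword σ * pword τ := by
  simp [pword]

lemma Smap_image_Icc (j : ℕ) (a b : ℝ) :
    Smap j '' Icc a b = Icc (Smap j a) (Smap j b) := by
  have h : Smap j = fun x => srat j * x + Smap j 0 := funext (Smap_affine j)
  rw [h]; exact Set.image_affine_Icc' (srat_pos j) _ _ _

lemma Sword_image_Icc (ω : List ℕ) (a b : ℝ) :
    Sword ω '' Icc a b = Icc (Sword ω a) (Sword ω b) := by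
  have h : Sword ω = fun x => sword ω * x + Sword ω 0 := funext (Sword_affine ω)
  rw [h]; exact Set.image_affine_Icc' (sword_pos ω) _ _ _

lemma Jword_eq (ω : List ℕ) : Jword ω = Icc (Sword ω 0) (Sword ω 1) :=
  Sword_image_Icc ω 0 1

lemma Smap_zero (j : ℕ) (hj : 1 ≤ j) : Smap j 0 = 1 - 3 * (3:ℝ)⁻¹ ^ j := by
  obtain ⟨m, rfl⟩ := Nat.exists_eq_add_of_le hj
  simp only [Smap, Nat.add_sub_cancel_left]
  rw [pow_add]
  have h3 : (3:ℝ) ^ m ≠ 0 := by positivity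
  field_simp
  rw [one_div_pow, pow_add]
  field_simp
  ring

lemma Smap_one (j : ℕ) (hj : 1 ≤ j) : Smap j 1 = 1 - 2 * (3:ℝ)⁻¹ ^ j := by
  simp only [Smap_affine j 1, Smap_zero j hj, srat]; ring

lemma Smap_mem_Icc {j : ℕ} (hj : 1 ≤ j) {x : ℝ} (hx : x ∈ Icc (0:ℝ) 1) :
    Smap j x ∈ Icc (0:ℝ) 1 := by
  have h3 : (3:ℝ)⁻¹ ^ j ≤ (3:ℝ)⁻¹ ^ 1 := by
    apply pow_le_pow_of_le_one (by norm_num) (by norm_num) hj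
  have h3' : (0:ℝ) < (3:ℝ)⁻¹ ^ j := by positivity
  have e0 := Smap_zero j hj
  have e1 := Smap_one j hj
  have hm : Smap j x ∈ Icc (Smap j 0) (Smap j 1) := by
    rw [← Smap_image_Icc]; exact ⟨x, hx, rfl⟩
  obtain ⟨l, r⟩ := hm
  constructor <;> [skip; skip] <;> nlinarith [l, r]

lemma Sword_mem_Icc {ω : List ℕ} (hω : ∀ i ∈ ω, 1 ≤ i) {x : ℝ} (hx : x ∈ Icc (0:ℝ) 1) :
    Sword ω x ∈ Icc (0:ℝ) 1 := by
  induction ω with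
  | nil => simpa [Sword]
  | cons j ω ih =>
    have := ih (fun i hi => hω i (List.mem_cons_of_mem _ hi))
    exact Smap_mem_Icc (hω j List.mem_cons_self) this

lemma Jword_subset_Icc {ω : List ℕ} (hω : ∀ i ∈ ω, 1 ≤ i) : Jword ω ⊆ Icc 0 1 := by
  rintro x ⟨y, hy, rfl⟩; exact Sword_mem_Icc hω hy

lemma Jset_disjoint {j k : ℕ} (hj : 1 ≤ j) (hk : 1 ≤ k) (hjk : j ≠ k) :
    Disjoint (Jset j) (Jset k) := by
  wlog h : j < k generalizing j k
  · exact (this hk hj hjk.symm (by omega)).symm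
  have e : Jset j = Icc (Smap j 0) (Smap j 1) := Smap_image_Icc j 0 1
  have e' : Jset k = Icc (Smap k 0) (Smap k 1) := Smap_image_Icc k 0 1
  have hlt : Smap j 1 < Smap k 0 := by
    rw [Smap_one j hj, Smap_zero k hk]
    have : (3:ℝ)⁻¹ ^ k ≤ (3:ℝ)⁻¹ ^ (j+1) :=
      pow_le_pow_of_le_one (by norm_num) (by norm_num) (by omega)
    rw [pow_succ] at this
    have hp : (0:ℝ) < (3:ℝ)⁻¹ ^ j := by positivity
    nlinarith
  rw [e, e', Set.disjoint_left]
  rintro x ⟨_, hx⟩ ⟨hy, _⟩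
  linarith

lemma Smap_injective (j : ℕ) : Function.Injective (Smap j) := by
  intro x y h
  have := Smap_sub j x y
  rw [h, sub_self] at this
  have := (mul_eq_zero.mp this.symm).resolve_left (ne_of_gt (srat_pos j))
  linarith

lemma Sword_injective (ω : List ℕ) : Function.Injective (Sword ω) := by
  intro x y h
  have := Sword_sub ω x y
  rw [h, sub_self] at this
  have := (mul_eq_zero.mp this.symm).resolve_left (ne_of_gt (sword_pos ω))
  linarith

lemma Smap_continuous (j : ℕ) : Continuous (Smap j) := by
  have h : Smap j = fun x => srat j * x + Smap j 0 := funext (Smap_affine j)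
  rw [h]; exact (continuous_const.mul continuous_id).add continuous_const

lemma Sword_continuous (ω : List ℕ) : Continuous (Sword ω) := by
  have h : Sword ω = fun x => sword ω * x + Sword ω 0 := funext (Sword_affine ω)
  rw [h]; exact (continuous_const.mul continuous_id).add continuous_const

lemma Smap_measurable (j : ℕ) : Measurable (Smap j) := (Smap_continuous j).measurable


variable {P : Measure ℝ} [IsProbabilityMeasure P]

lemma ae_mem_Icc (hsupp : P (Set.Icc 0 1) = 1) : ∀ᵐ x ∂P, x ∈ Icc (0:ℝ) 1 := by
  have hc : P (Icc (0:ℝ) 1)ᶜ = 0 := by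
    have := measure_compl (measurableSet_Icc (a := (0:ℝ)) (b := 1)) (measure_ne_top P _)
    rw [hsupp, measure_univ] at this
    simpa using this
  exact ae_iff.mpr hc

lemma integrable_cont (hsupp : P (Set.Icc 0 1) = 1) {f : ℝ → ℝ} (hf : Continuous f) :
    Integrable f P := by
  obtain ⟨C, hC⟩ := isCompact_Icc.exists_bound_of_continuousOn
    (hf.continuousOn : ContinuousOn f (Icc (0:ℝ) 1))
  refine ⟨hf.aestronglyMeasurable, HasFiniteIntegral.of_bounded (C := C) ?_⟩
  filter_upwards [ae_mem_Icc hsupp] with x hx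
  exact hC x hx

lemma null_of_disjoint_Icc (hsupp : P (Set.Icc 0 1) = 1) {s : Set ℝ}
    (h : s ∩ Icc (0:ℝ) 1 = ∅) : P s = 0 := by
  have hc : P (Icc (0:ℝ) 1)ᶜ = 0 := by
    have := measure_compl (measurableSet_Icc (a := (0:ℝ)) (b := 1)) (measure_ne_top P _)
    rw [hsupp, measure_univ] at this
    simpa using this
  have hsub : s ⊆ (Icc (0:ℝ) 1)ᶜ := by
    intro x hx
    intro hmem
    exact absurd (Set.mem_inter hx hmem) (by simp [h])
  exact measure_mono_null hsub hc

lemma setIntegral_zero_of_null {s : Set ℝ} (h : P s = 0) (f : ℝ → ℝ) :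
    ∫ x in s, f x ∂P = 0 := by
  rw [Measure.restrict_eq_zero.mpr h, integral_zero_measure]

lemma key_sum (hsupp : P (Set.Icc 0 1) = 1) (hself : SelfSim P)
    {f : ℝ → ℝ} (hf : Continuous f) {A : Set ℝ} (hA : MeasurableSet A) :
    ∫ x in A, f x ∂P
      = ∑' j : ℕ, (2:ℝ)⁻¹ ^ (j+1) * ∫ x in Smap (j+1) ⁻¹' A, f (Smap (j+1) x) ∂P := by
  have hint : Integrable f P := integrable_cont hsupp hf
  have hintA : Integrable f (P.restrict A) := hint.restrict
  have hsum : Integrable f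
      (Measure.sum fun j : ℕ =>
        (((2 : ℝ≥0∞) ^ (j + 1))⁻¹ • P.map (Smap (j + 1))).restrict A) := by
    rw [← Measure.restrict_sum _ hA, ← hself]; exact hintA
  calc ∫ x in A, f x ∂P
      = ∫ x, f x ∂(Measure.sum fun j : ℕ =>
          (((2 : ℝ≥0∞) ^ (j + 1))⁻¹ • P.map (Smap (j + 1))).restrict A) := by
        conv_lhs => rw [hself]
        rw [Measure.restrict_sum _ hA]
    _ = ∑' j : ℕ, ∫ x, f x ∂((((2 : ℝ≥0∞) ^ (j + 1))⁻¹ • P.map (Smap (j + 1))).restrict A) :=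
        integral_sum_measure hsum
    _ = ∑' j : ℕ, (2:ℝ)⁻¹ ^ (j+1) * ∫ x in Smap (j+1) ⁻¹' A, f (Smap (j+1) x) ∂P := by
        refine tsum_congr fun j => ?_
        rw [Measure.restrict_smul, integral_smul_measure,
          Measure.restrict_map (Smap_measurable (j+1)) hA,
          integral_map (Smap_measurable (j+1)).aemeasurable hf.aestronglyMeasurable]
        congr 1
        simp [ENNReal.toReal_inv, ENNReal.toReal_pow]

lemma Jword_cons (j : ℕ) (ω : List ℕ) : Jword (j :: ω) = Smap j '' Jword ω := by
  rw [Jword, Jword, show Sword (j :: ω) = Smap j ∘ Sword ω from rfl, Set.image_comp]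

lemma word_integral (hsupp : P (Set.Icc 0 1) = 1) (hself : SelfSim P)
    {ω : List ℕ} (hω : ∀ i ∈ ω, 1 ≤ i) {f : ℝ → ℝ} (hf : Continuous f) :
    ∫ x in Jword ω, f x ∂P = pword ω * ∫ x, f (Sword ω x) ∂P := by
  induction ω generalizing f with
  | nil =>
    rw [show Jword [] = Icc (0:ℝ) 1 by simp [Jword, Sword],
      Measure.restrict_eq_self_of_ae_mem (ae_mem_Icc hsupp)]
    simp [pword, Sword]
  | cons j ω ih =>
    have hj : 1 ≤ j := hω j List.mem_cons_self
    have hω' : ∀ i ∈ ω, 1 ≤ i := fun i hi => hω i (List.mem_cons_of_mem _ hi)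
    obtain ⟨m, rfl⟩ : ∃ m, j = m + 1 := ⟨j - 1, by omega⟩
    have hA : MeasurableSet (Jword ((m + 1) :: ω)) := by
      rw [Jword_eq]; exact measurableSet_Icc
    rw [key_sum hsupp hself hf hA]
    have hzero : ∀ k : ℕ, k ≠ m →
        (2:ℝ)⁻¹ ^ (k+1) * ∫ x in Smap (k+1) ⁻¹' Jword ((m + 1) :: ω), f (Smap (k+1) x) ∂P = 0 := by
      intro k hk
      have hnull : P (Smap (k+1) ⁻¹' Jword ((m + 1) :: ω)) = 0 := by
        apply null_of_disjoint_Icc hsupp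
        ext x
        simp only [Set.mem_inter_iff, Set.mem_preimage, Set.mem_empty_iff_false, iff_false,
          not_and]
        intro hxJ hxI
        have h1 : Smap (k+1) x ∈ Jset (m+1) := by
          rw [Jword_cons] at hxJ
          obtain ⟨y, hy, hxy⟩ := hxJ
          exact ⟨y, Jword_subset_Icc hω' hy, hxy⟩
        have h2 : Smap (k+1) x ∈ Jset (k+1) := ⟨x, hxI, rfl⟩
        exact Set.disjoint_left.mp
          (Jset_disjoint (by omega) (by omega) (by omega)) h2 h1
      rw [setIntegral_zero_of_null hnull]
      ring
    rw [tsum_eq_single m (fun k hk => hzero k hk)]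
    have hpre : Smap (m+1) ⁻¹' Jword ((m + 1) :: ω) = Jword ω := by
      rw [Jword_cons, Set.preimage_image_eq _ (Smap_injective (m+1))]
    rw [hpre, show (fun x => f (Smap (m+1) x)) = f ∘ Smap (m+1) from rfl,
      ih hω' (hf.comp (Smap_continuous (m+1)))]
    simp only [Function.comp_apply,
      show ∀ x, Sword ((m+1) :: ω) x = Smap (m+1) (Sword ω x) from fun _ => rfl,
      pword, List.map_cons, List.prod_cons, prob]
    ring

lemma integral_univ_sum (hsupp : P (Set.Icc 0 1) = 1) (hself : SelfSim P)
    {f : ℝ → ℝ} (hf : Continuous f) :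
    ∫ x, f x ∂P = ∑' j : ℕ, (2:ℝ)⁻¹ ^ (j+1) * ∫ x, f (Smap (j+1) x) ∂P := by
  have := key_sum hsupp hself hf MeasurableSet.univ
  simpa using this

lemma summable_geom_succ {r : ℝ} (h0 : 0 ≤ r) (h1 : r < 1) :
    Summable (fun j : ℕ => r^(j+1)) := by
  simp_rw [pow_succ']
  exact (summable_geometric_of_lt_one h0 h1).mul_left r

lemma tsum_geom_succ {r : ℝ} (h0 : 0 ≤ r) (h1 : r < 1) :
    ∑' j : ℕ, r^(j+1) = r/(1-r) := by
  simp_rw [pow_succ']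
  rw [tsum_mul_left, tsum_geometric_of_lt_one h0 h1, div_eq_mul_inv]

lemma tsum_three (a b c : ℝ) :
    ∑' j : ℕ, (a*(2:ℝ)⁻¹^(j+1) + b*(6:ℝ)⁻¹^(j+1) + c*(18:ℝ)⁻¹^(j+1))
      = a + b*(1/5) + c*(1/17) := by
  have s2 := summable_geom_succ (r := (2:ℝ)⁻¹) (by norm_num) (by norm_num)
  have s6 := summable_geom_succ (r := (6:ℝ)⁻¹) (by norm_num) (by norm_num)
  have s18 := summable_geom_succ (r := (18:ℝ)⁻¹) (by norm_num) (by norm_num)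
  rw [Summable.tsum_add ((s2.mul_left a).add (s6.mul_left b)) (s18.mul_left c),
    Summable.tsum_add (s2.mul_left a) (s6.mul_left b), tsum_mul_left, tsum_mul_left, tsum_mul_left,
    tsum_geom_succ (by norm_num) (by norm_num), tsum_geom_succ (by norm_num) (by norm_num),
    tsum_geom_succ (by norm_num) (by norm_num)]
  norm_num

lemma integral_lin (hsupp : P (Set.Icc 0 1) = 1) (s c : ℝ) :
    ∫ x, (s * (x - 1/2) + c) ∂P = s * (∫ x, (x - 1/2) ∂P) + c := by
  have h2 : Integrable (fun x : ℝ => x - 1/2) P :=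
    integrable_cont hsupp (by continuity)
  rw [integral_add (h2.const_mul s) (integrable_const c), integral_const_mul _ _, integral_const]
  simp

lemma integral_quad (hsupp : P (Set.Icc 0 1) = 1) (s c : ℝ) :
    ∫ x, (s * (x - 1/2) + c)^2 ∂P
      = s^2 * (∫ x, (x - 1/2)^2 ∂P) + 2*s*c*(∫ x, (x - 1/2) ∂P) + c^2 := by
  have h1 : Integrable (fun x : ℝ => (x - 1/2)^2) P := integrable_cont hsupp (by continuity)
  have h2 : Integrable (fun x : ℝ => x - 1/2) P := integrable_cont hsupp (by continuity)
  have e : (fun x : ℝ => (s*(x - 1/2) + c)^2)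
      = fun x => s^2*(x-1/2)^2 + ((2*s*c)*(x-1/2) + c^2) := by funext x; ring
  have h3 : Integrable (fun x : ℝ => 2*s*c*(x - 1/2) + c^2) P :=
    (h2.const_mul _).add (integrable_const _)
  rw [e, integral_add (h1.const_mul _) h3, integral_const_mul _ _, integral_lin hsupp]
  ring

lemma moment1 (hsupp : P (Set.Icc 0 1) = 1) (hself : SelfSim P) :
    ∫ x, (x - 1/2) ∂P = 0 := by
  set M := ∫ x, (x - 1/2 : ℝ) ∂P with hM
  have h := integral_univ_sum hsupp hself (f := fun x : ℝ => x - 1/2) (by continuity)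
  have hterm : ∀ j : ℕ, (2:ℝ)⁻¹^(j+1) * ∫ x, (Smap (j+1) x - 1/2) ∂P
      = (1/2:ℝ)*(2:ℝ)⁻¹^(j+1) + (M - 5/2)*(6:ℝ)⁻¹^(j+1) + 0*(18:ℝ)⁻¹^(j+1) := by
    intro j
    have e : (fun x : ℝ => Smap (j+1) x - 1/2)
        = fun x => srat (j+1) * (x - 1/2) + (1/2 - (5/2)*(3:ℝ)⁻¹^(j+1)) := by
      funext x
      rw [Smap_affine, Smap_zero _ (by omega), srat]; ring
    rw [e, integral_lin hsupp, srat, ← hM,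
      show (6:ℝ)⁻¹ = (2:ℝ)⁻¹*(3:ℝ)⁻¹ by norm_num, mul_pow]
    ring
  rw [← hM, tsum_congr hterm, tsum_three] at h
  linarith

lemma moment2 (hsupp : P (Set.Icc 0 1) = 1) (hself : SelfSim P) :
    ∫ x, (x - 1/2)^2 ∂P = 1/8 := by
  set V := ∫ x, ((x - 1/2 : ℝ))^2 ∂P with hV
  have hM0 := moment1 hsupp hself
  have h := integral_univ_sum hsupp hself (f := fun x : ℝ => (x - 1/2)^2) (by continuity)
  have hterm : ∀ j : ℕ, (2:ℝ)⁻¹^(j+1) * ∫ x, (Smap (j+1) x - 1/2)^2 ∂P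
      = (1/4:ℝ)*(2:ℝ)⁻¹^(j+1) + (-(5/2))*(6:ℝ)⁻¹^(j+1) + (V + 25/4)*(18:ℝ)⁻¹^(j+1) := by
    intro j
    have e : (fun x : ℝ => (Smap (j+1) x - 1/2)^2)
        = fun x => (srat (j+1) * (x - 1/2) + (1/2 - (5/2)*(3:ℝ)⁻¹^(j+1)))^2 := by
      funext x
      rw [Smap_affine, Smap_zero _ (by omega), srat]; ring
    rw [e, integral_quad hsupp, hM0, srat, ← hV,
      show (6:ℝ)⁻¹ = (2:ℝ)⁻¹*(3:ℝ)⁻¹ by norm_num,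
      show (18:ℝ)⁻¹ = (2:ℝ)⁻¹*((3:ℝ)⁻¹*(3:ℝ)⁻¹) by norm_num, mul_pow, mul_pow, mul_pow]
    ring
  rw [← hV, tsum_congr hterm, tsum_three] at h
  linarith

lemma Sword_add (σ : List ℕ) (a c : ℝ) : Sword σ (a + c) = Sword σ a + sword σ * c := by
  rw [Sword_affine σ (a + c), Sword_affine σ a]; ring

lemma sword_single (k : ℕ) : sword [k] = (3:ℝ)⁻¹ ^ k := by simp [sword, srat]

lemma pword_concat (σ : List ℕ) (k : ℕ) : pword (σ ++ [k]) = pword σ * (2:ℝ)⁻¹ ^ k := by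
  rw [pword_append]; simp [pword, prob]

lemma sword_concat (σ : List ℕ) (k : ℕ) : sword (σ ++ [k]) = sword σ * (3:ℝ)⁻¹ ^ k := by
  rw [sword_append, sword_single]

lemma Sword_concat (σ : List ℕ) (k : ℕ) (x : ℝ) :
    Sword (σ ++ [k]) x = Sword σ (Smap k x) := by
  rw [Sword_append]; rfl

lemma Jword_concat (σ : List ℕ) (k : ℕ) : Jword (σ ++ [k]) = Sword σ '' Jset k := by
  rw [Jword, Jset, show Sword (σ ++ [k]) = Sword σ ∘ Smap k from funext fun x => Sword_concat σ k x,
    Set.image_comp]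

lemma awInf_concat (σ : List ℕ) (m : ℕ) :
    awInf (σ ++ [m]) = Sword σ (1 - (1/2) * (3:ℝ)⁻¹ ^ m) := by
  have hw : wordInc (σ ++ [m]) 1 = σ ++ [m + 1] := by
    rw [wordInc, List.dropLast_concat, List.getLastD_concat]
  rw [awInf, hw, Sword_concat, sword_concat, ← Sword_add]
  congr 1
  rw [Smap_affine, Smap_zero _ (by omega), srat, pow_succ]
  ring

lemma Smap_shift (m t : ℕ) (ht : 1 ≤ t) (x : ℝ) :
    Smap (m + t) x - (1 - (1/2) * (3:ℝ)⁻¹ ^ m) = (3:ℝ)⁻¹ ^ m * (Smap t x - 1/2) := by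
  rw [Smap_affine (m+t), Smap_affine t, Smap_zero (m+t) (by omega), Smap_zero t ht,
    srat, srat, pow_add]
  ring

theorem error_of_aw_and_awInf (P : Measure ℝ) [IsProbabilityMeasure P]
    (hsupp : P (Set.Icc 0 1) = 1) (hself : SelfSim P) (ω : List ℕ) (hω : IsWord ω) :
    (∫ x in Jword ω, (x - aw ω) ^ 2 ∂P) = pword ω * sword ω ^ 2 * (1 / 8) ∧
    (∫ x in JwordInf ω, (x - awInf ω) ^ 2 ∂P) = pword ω * sword ω ^ 2 * (1 / 8) := by
  have hV := moment2 hsupp hself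
  constructor
  · have hf : Continuous fun x : ℝ => (x - aw ω)^2 := by continuity
    rw [word_integral hsupp hself hω.2 hf]
    have e : (fun x : ℝ => (Sword ω x - aw ω)^2) = fun x => sword ω^2 * ((x - 1/2)^2) := by
      funext x
      rw [aw, Sword_sub]; ring
    calc pword ω * ∫ x, (Sword ω x - aw ω)^2 ∂P
        = pword ω * ∫ x, sword ω^2 * ((x - 1/2)^2) ∂P := by rw [e]
      _ = pword ω * (sword ω^2 * ∫ x, (x - 1/2)^2 ∂P) := by rw [integral_const_mul _ _]
      _ = pword ω * sword ω ^ 2 * (1 / 8) := by rw [hV]; ring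
  · obtain ⟨σ, m, rfl⟩ := (List.eq_nil_or_concat' ω).resolve_left hω.1
    have hm : 1 ≤ m := hω.2 m (by simp)
    have hfc : Continuous fun x : ℝ => (x - awInf (σ ++ [m]))^2 := by continuity
    have hwi : ∀ t : ℕ, wordInc (σ ++ [m]) t = σ ++ [m + t] := by
      intro t; rw [wordInc, List.dropLast_concat, List.getLastD_concat]
    have hJInf : JwordInf (σ ++ [m]) = ⋃ j : ℕ, Jword (σ ++ [m + (j+1)]) := by
      rw [JwordInf]; exact iUnion_congr fun j => by rw [hwi]
    have hmeas : ∀ j : ℕ, MeasurableSet (Jword (σ ++ [m + (j+1)])) := by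
      intro j; rw [Jword_eq]; exact measurableSet_Icc
    have hdisj : Pairwise (Function.onFun Disjoint fun j : ℕ => Jword (σ ++ [m + (j+1)])) := by
      intro i j hij
      simp only [Function.onFun, Jword_concat]
      exact (Set.disjoint_image_iff (Sword_injective σ)).mpr
        (Jset_disjoint (by omega) (by omega) (by omega))
    rw [hJInf, integral_iUnion hmeas hdisj (integrable_cont hsupp hfc).integrableOn]
    set I : ℕ → ℝ := fun j => ∫ x, (Smap (j+1) x - 1/2)^2 ∂P with hI
    have hterm : ∀ j : ℕ,
        (∫ x in Jword (σ ++ [m + (j+1)]), (x - awInf (σ ++ [m]))^2 ∂P)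
          = (pword σ * (2:ℝ)⁻¹^m * (sword σ^2 * ((3:ℝ)⁻¹^m)^2)) * ((2:ℝ)⁻¹^(j+1) * I j) := by
      intro j
      have hall : ∀ i ∈ σ ++ [m + (j+1)], 1 ≤ i := by
        intro i hi
        rcases List.mem_append.mp hi with h | h
        · exact hω.2 i (List.mem_append.mpr (Or.inl h))
        · simp at h; omega
      rw [word_integral hsupp hself hall hfc]
      have e : (fun x : ℝ => (Sword (σ ++ [m + (j+1)]) x - awInf (σ ++ [m]))^2)
          = fun x => (sword σ^2 * ((3:ℝ)⁻¹^m)^2) * ((Smap (j+1) x - 1/2)^2) := by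
        funext x
        rw [Sword_concat, awInf_concat, Sword_sub, Smap_shift m (j+1) (by omega)]
        ring
      calc pword (σ ++ [m + (j+1)]) * ∫ x, (Sword (σ ++ [m + (j+1)]) x - awInf (σ ++ [m]))^2 ∂P
          = pword (σ ++ [m + (j+1)]) * ∫ x, (sword σ^2 * ((3:ℝ)⁻¹^m)^2) * ((Smap (j+1) x - 1/2)^2) ∂P := by
            rw [e]
        _ = pword (σ ++ [m + (j+1)]) * ((sword σ^2 * ((3:ℝ)⁻¹^m)^2) * I j) := by
            rw [integral_const_mul _ _]
        _ = _ := by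
            rw [pword_concat, pow_add]
            ring
    rw [tsum_congr hterm, tsum_mul_left]
    have hsum : ∑' j : ℕ, (2:ℝ)⁻¹^(j+1) * I j = 1/8 := by
      rw [← integral_univ_sum hsupp hself (f := fun x : ℝ => (x - 1/2)^2) (by continuity), hV]
    rw [hsum, pword_concat, sword_concat]
    ring

end
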